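/- Let Z be a Borel P-ideal on ℕ given as Z = {x ⊆ ℕ : φ_∞(x) = 0} for a lower semicontinuous submeasure φ with φ_∞(x) = inf_n φ(x ∩ [n,∞)), and let r_k = φ({k}). Set U_n = {k : r_k ≤ 1/n} (with U_0 = ℕ). If inf_n φ(U_n) = 0, then a set x ⊆ ℕ belongs to Z if and only if x \ U_n is finite for every n. -/

import Mathlib

open scoped ENNReal

/-- Let `Z = Exh_φ` for a lower semicontinuous submeasure `φ` on `ℕ`, let
`r_k = φ({k})` and `U_n = {k : r_k ≤ 1/n}` (with `U_0 = ℕ`). If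
`inf_n φ(U_n) = 0`, then `x ∈ Z` iff `x \ U_n` is finite for every `n`. -/
theorem exh_eq_iff_diff_finite_of_inf_eq_zero
    (φ : Set ℕ → ℝ≥0∞)
    (hempty : φ ∅ = 0)
    (hsingleton : ∀ a : ℕ, φ {a} < ⊤)
    (hmono : ∀ x y : Set ℕ, φ x ≤ φ (x ∪ y))
    (hsubadd : ∀ x y : Set ℕ, φ (x ∪ y) ≤ φ x + φ y)
    (hlsc : ∀ x : Set ℕ, φ x = ⨆ n : ℕ, φ (x ∩ Set.Iio n))
    (U : ℕ → Set ℕ)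
    (hU0 : U 0 = Set.univ)
    (hU : ∀ n : ℕ, 0 < n → U n = {k : ℕ | φ {k} ≤ 1 / (n : ℝ≥0∞)})
    (hinf : (⨅ n : ℕ, φ (U n)) = 0) :
    ∀ x : Set ℕ,
      (⨅ n : ℕ, φ (x ∩ Set.Ici n)) = 0 ↔ ∀ n : ℕ, (x \ U n).Finite := by
  have mono : ∀ s t : Set ℕ, s ⊆ t → φ s ≤ φ t := by
    intro s t h
    have := hmono s t
    rwa [Set.union_eq_self_of_subset_left h] at this
  intro x
  constructor
  · intro hx n
    rcases Nat.eq_zero_or_pos n with rfl | hn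
    · rw [hU0]
      simp
    · by_contra hfin
      have hinfinite : (x \ U n).Infinite := hfin
      have key : ∀ m : ℕ, 1 / (n : ℝ≥0∞) ≤ φ (x ∩ Set.Ici m) := by
        intro m
        obtain ⟨k, hk, hkm⟩ := hinfinite.exists_gt m
        have hkx : k ∈ x := hk.1
        have hkU : φ {k} > 1 / (n : ℝ≥0∞) := by
          have := hk.2
          rw [hU n hn] at this
          exact lt_of_not_ge this
        calc 1 / (n : ℝ≥0∞) ≤ φ {k} := hkU.le
          _ ≤ φ (x ∩ Set.Ici m) := mono _ _ (by
              intro a ha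
              rcases ha with rfl
              exact ⟨hkx, le_of_lt hkm⟩)
      have : 1 / (n : ℝ≥0∞) ≤ ⨅ m : ℕ, φ (x ∩ Set.Ici m) := le_iInf key
      rw [hx] at this
      have hpos : (0 : ℝ≥0∞) < 1 / (n : ℝ≥0∞) :=
        ENNReal.div_pos one_ne_zero (by exact_mod_cast ENNReal.natCast_ne_top n)
      exact absurd this (not_le.mpr hpos)
  · intro hfin
    refine le_antisymm ?_ zero_le
    rw [← hinf]
    refine le_iInf fun n => ?_
    obtain ⟨m, hm⟩ : ∃ m : ℕ, ∀ k ∈ x \ U n, k < m := by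
      rcases (hfin n).bddAbove with ⟨b, hb⟩
      exact ⟨b + 1, fun k hk => Nat.lt_succ_of_le (hb hk)⟩
    refine le_trans (iInf_le _ m) (mono _ _ ?_)
    intro k hk
    by_contra hkU
    exact absurd hk.2 (not_le.mpr (hm k ⟨hk.1, hkU⟩))
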